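/- Let q be a prime power, n ≥ 1, and H a function on F_{q^n} such that x ↦ Tr(H(x)) is not constant. Then |P_H| ≤ q^n − q^{n−1}, where P_H = {γ ∈ F_{q^n} : x + γ·Tr(H(x)) permutes F_{q^n}}. -/

import Mathlib

/-- The trace-like map `x ↦ ∑_{i<n} x^(q^i)` from `F_{q^n}` to `F_q`. -/
def fieldTrace (q n : ℕ) {F : Type*} [Field F] (x : F) : F :=
  ∑ i ∈ Finset.range n, x ^ q ^ i

theorem stmt_8 (p m n : ℕ) (hp : p.Prime) (hm : 0 < m) (hn : 0 < n)
    (F : Type*) [Field F] [Fintype F] (hF : Fintype.card F = (p ^ m) ^ n)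
    (H : F → F)
    (hnc : ¬ ∃ c : F, ∀ x : F, fieldTrace (p ^ m) n (H x) = c) :
    Nat.card {γ : F //
        Function.Bijective (fun x : F => x + γ * fieldTrace (p ^ m) n (H x))} ≤
      (p ^ m) ^ n - (p ^ m) ^ (n - 1) := by
  classical
  set q : ℕ := p ^ m with hq
  have hq1 : 1 < q := Nat.one_lt_pow hm.ne' hp.one_lt
  have hq0 : 0 < q := by omega
  set t : F → F := fun x => fieldTrace q n (H x) with htdef
  -- characteristic
  obtain ⟨r, hr⟩ := CharP.exists F
  haveI : CharP F r := hr
  have hrprime : r.Prime := CharP.char_is_prime F r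
  have hrp : r = p := by
    have h0 : (Fintype.card F : F) = 0 := FiniteField.cast_card_eq_zero F
    rw [hF] at h0
    have hdvd : r ∣ (p ^ m) ^ n := (CharP.cast_eq_zero_iff F r _).mp h0
    rw [← pow_mul] at hdvd
    exact (Nat.prime_dvd_prime_iff_eq hrprime hp).mp (hrprime.dvd_of_dvd_pow hdvd)
  subst hrp
  haveI : Fact r.Prime := ⟨hp⟩
  -- every value of fieldTrace satisfies x^q = x
  have hpowcard : ∀ x : F, x ^ q ^ n = x := fun x => by
    have h := FiniteField.pow_card x (K := F)
    rwa [hF] at h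
  have hfix : ∀ y : F, (fieldTrace q n y) ^ q = fieldTrace q n y := by
    intro y
    have hfrob : (fieldTrace q n y) ^ q = ∑ i ∈ Finset.range n, y ^ q ^ (i + 1) := by
      rw [hq, ← iterateFrobenius_def (p := r)]
      rw [fieldTrace, map_sum]
      refine Finset.sum_congr rfl fun i _ => ?_
      rw [iterateFrobenius_def, ← pow_mul, ← pow_succ]
    have h1 : ∑ i ∈ Finset.range (n + 1), y ^ q ^ i
        = (∑ i ∈ Finset.range n, y ^ q ^ (i + 1)) + y ^ q ^ 0 :=
      Finset.sum_range_succ' _ n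
    have h2 : ∑ i ∈ Finset.range (n + 1), y ^ q ^ i
        = (∑ i ∈ Finset.range n, y ^ q ^ i) + y ^ q ^ n := Finset.sum_range_succ _ n
    have h3 := h1.symm.trans h2
    rw [hpowcard, pow_zero, pow_one] at h3
    rw [hfrob, fieldTrace]
    linear_combination h3
  -- the set of q-th "fixed points" has at most q elements
  set S : Finset F := Finset.univ.filter (fun x => x ^ q = x) with hS
  have hScard : S.card ≤ q := by
    set g : Polynomial F := Polynomial.X ^ q - Polynomial.X with hg
    have hg0 : g ≠ 0 := by
      intro h
      have hcoeff : g.coeff q = 1 := by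
        simp [hg, Polynomial.coeff_X_pow, Polynomial.coeff_X, show q ≠ 1 by omega, show ¬(1 = q) by omega]
      rw [h] at hcoeff
      simp at hcoeff
    have hdeg : g.natDegree ≤ q := by
      refine le_trans (Polynomial.natDegree_sub_le _ _) ?_
      simp only [Polynomial.natDegree_X_pow, Polynomial.natDegree_X]
      omega
    have hsub : S ⊆ g.roots.toFinset := by
      intro x hx
      rw [Multiset.mem_toFinset, Polynomial.mem_roots hg0]
      have hx' : x ^ q = x := (Finset.mem_filter.mp hx).2
      simp [hg, Polynomial.IsRoot, hx', sub_eq_zero]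
    calc S.card ≤ g.roots.toFinset.card := Finset.card_le_card hsub
      _ ≤ Multiset.card g.roots := Multiset.toFinset_card_le _
      _ ≤ g.natDegree := Polynomial.card_roots' g
      _ ≤ q := hdeg
  -- pigeonhole: some fiber of t has at least q^(n-1) elements
  have hmaps : ∀ x ∈ (Finset.univ : Finset F), t x ∈ S := fun x _ => by
    simp only [hS, Finset.mem_filter, Finset.mem_univ, true_and]
    exact hfix (H x)
  have hSne : S.Nonempty := ⟨t 0, hmaps 0 (Finset.mem_univ _)⟩
  have hcount : S.card * q ^ (n - 1) ≤ (Finset.univ : Finset F).card := by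
    rw [Finset.card_univ, hF]
    calc S.card * q ^ (n - 1) ≤ q * q ^ (n - 1) := Nat.mul_le_mul_right _ hScard
      _ = q ^ n := by rw [← pow_succ']; congr 1; omega
  obtain ⟨b, _, hb⟩ := Finset.exists_le_card_fiber_of_mul_le_card_of_maps_to hmaps hSne hcount
  set Fb : Finset F := Finset.univ.filter (fun x => t x = b) with hFb
  -- a point with different t-value
  have hv0 : ∃ v : F, t v ≠ b := by
    by_contra h
    push_neg at h
    exact hnc ⟨b, h⟩
  obtain ⟨v, hv⟩ := hv0
  have hden : t v - b ≠ 0 := sub_ne_zero.mpr hv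
  -- the injection from Fb into the complement of P
  set Φ : F → F := fun u => (u - v) / (t v - b) with hΦ
  have hΦinj : Set.InjOn Φ Fb := by
    intro x _ y _ hxy
    simp only [hΦ, div_left_inj' hden, sub_left_inj] at hxy
    exact hxy
  set P : Finset F := Finset.univ.filter
      (fun γ => Function.Bijective (fun x : F => x + γ * t x)) with hP
  have hdisj : ∀ u ∈ Fb, Φ u ∉ P := by
    intro u hu hmem
    have hub : t u = b := (Finset.mem_filter.mp hu).2
    have hbij := (Finset.mem_filter.mp hmem).2
    have huv : u ≠ v := by
      intro h
      rw [h] at hub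
      exact hv hub
    have heq : u + Φ u * t u = v + Φ u * t v := by
      rw [hub, hΦ]
      field_simp
      ring
    exact huv (hbij.injective heq)
  have hEP : Disjoint (Fb.image Φ) P := by
    rw [Finset.disjoint_left]
    intro a ha haP
    obtain ⟨u, hu, rfl⟩ := Finset.mem_image.mp ha
    exact hdisj u hu haP
  have hEcard : q ^ (n - 1) ≤ (Fb.image Φ).card := by
    rw [Finset.card_image_of_injOn hΦinj]
    exact hb
  -- final counting
  have hPcard : P.card ≤ q ^ n - q ^ (n - 1) := by
    have h1 : (Fb.image Φ).card + P.card ≤ Fintype.card F := by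
      rw [← Finset.card_union_of_disjoint hEP, ← Finset.card_univ]
      exact Finset.card_le_card (Finset.subset_univ _)
    rw [hF] at h1
    omega
  have hcardeq : Nat.card {γ : F // Function.Bijective
        (fun x : F => x + γ * fieldTrace q n (H x))} = P.card := by
    rw [Nat.card_eq_fintype_card, Fintype.card_subtype, hP]
  rw [hcardeq]
  exact hPcard
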